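/- Let C ⊆ ℍⁿ_κ be a closed κ-hyperbolically convex set, p ∈ ℍⁿ_κ and u ∈ K_C \ {0} where K_C is the cone spanned by C. If (2 p_{n+1} e^{n+1} − u)ᵀ(q − u/√(−κ⟨u,u⟩)) ≥ 0 for all q ∈ C, and u is a Euclidean orthogonal projection of p onto K_C, then P_C(p) = u/√(−κ⟨u,u⟩). -/
import Mathlib


noncomputable section

/-- Lorentzian inner product on ℝ^{n+1}. -/
def lip {n : ℕ} (x y : Fin (n+1) → ℝ) : ℝ :=
  (∑ i : Fin n, x i.castSucc * y i.castSucc) - x (Fin.last n) * y (Fin.last n)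

/-- Lorentzian norm (of vectors with nonnegative self-product). -/
def lnorm {n : ℕ} (x : Fin (n+1) → ℝ) : ℝ := Real.sqrt (lip x x)

/-- Euclidean dot product. -/
def edot {n : ℕ} (x y : Fin (n+1) → ℝ) : ℝ := ∑ i, x i * y i

/-- The matrix J = diag(1,…,1,−1) as a map. -/
def Jm {n : ℕ} (x : Fin (n+1) → ℝ) : Fin (n+1) → ℝ :=
  fun i => if i = Fin.last n then -(x i) else x i

/-- The κ-hyperbolic space form (hyperboloid model). -/
def Hyp {n : ℕ} (κ : ℝ) : Set (Fin (n+1) → ℝ) :=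
  {p | lip p p = -1/κ ∧ 0 < p (Fin.last n)}

/-- Inverse hyperbolic cosine. -/
def arcosh (x : ℝ) : ℝ := Real.log (x + Real.sqrt (x^2 - 1))

/-- Intrinsic distance on the κ-hyperbolic space form. -/
def dH {n : ℕ} (κ : ℝ) (p q : Fin (n+1) → ℝ) : ℝ :=
  (1 / Real.sqrt κ) * arcosh (-(κ * lip p q))

/-- Lorentzian projection onto the tangent space at p. -/
def projT {n : ℕ} (κ : ℝ) (p x : Fin (n+1) → ℝ) : Fin (n+1) → ℝ :=
  x + (κ * lip p x) • p

/-- Logarithm map of the κ-hyperbolic space form. -/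
def logH {n : ℕ} (κ : ℝ) (p q : Fin (n+1) → ℝ) : Fin (n+1) → ℝ :=
  (dH κ p q / lnorm (projT κ p q)) • projT κ p q

/-- Exponential map of the κ-hyperbolic space form. -/
def expH {n : ℕ} (κ : ℝ) (p v : Fin (n+1) → ℝ) : Fin (n+1) → ℝ :=
  Real.cosh (Real.sqrt κ * lnorm v) • p +
    (Real.sinh (Real.sqrt κ * lnorm v) / (Real.sqrt κ * lnorm v)) • v

/-- The cone spanned by a set. -/
def coneOf {n : ℕ} (C : Set (Fin (n+1) → ℝ)) : Set (Fin (n+1) → ℝ) :=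
  {x | ∃ t : ℝ, 0 ≤ t ∧ ∃ p ∈ C, x = t • p}

/-- The Lorentz cone. -/
def LorentzCone {n : ℕ} : Set (Fin (n+1) → ℝ) :=
  {x | lip x x ≤ 0 ∧ 0 ≤ x (Fin.last n)}

/-- The interior of the Lorentz cone. -/
def LorentzConeInt {n : ℕ} : Set (Fin (n+1) → ℝ) :=
  {x | lip x x < 0 ∧ 0 < x (Fin.last n)}


lemma lip_smul_right {n : ℕ} (t : ℝ) (x y : Fin (n+1) → ℝ) :
    lip x (t • y) = t * lip x y := by
  simp only [lip, Pi.smul_apply, smul_eq_mul, mul_sub, Finset.mul_sum]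
  congr 1
  · exact Finset.sum_congr rfl (fun i _ => by ring)
  · ring

lemma lip_smul_left {n : ℕ} (t : ℝ) (x y : Fin (n+1) → ℝ) :
    lip (t • x) y = t * lip x y := by
  simp only [lip, Pi.smul_apply, smul_eq_mul, mul_sub, Finset.mul_sum]
  congr 1
  · exact Finset.sum_congr rfl (fun i _ => by ring)
  · ring

lemma edot_eq_lip {n : ℕ} (x y : Fin (n+1) → ℝ) :
    edot x y = lip x y + 2 * x (Fin.last n) * y (Fin.last n) := by
  simp [edot, lip, Fin.sum_univ_castSucc]; ring

lemma edot_smul_left {n : ℕ} (t : ℝ) (x y : Fin (n+1) → ℝ) :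
    edot (t • x) y = t * edot x y := by
  simp [edot, Finset.mul_sum]
  exact Finset.sum_congr rfl (fun i _ => by ring)

lemma edot_smul_right {n : ℕ} (t : ℝ) (x y : Fin (n+1) → ℝ) :
    edot x (t • y) = t * edot x y := by
  simp [edot, Finset.mul_sum]
  exact Finset.sum_congr rfl (fun i _ => by ring)

lemma edot_sub_left {n : ℕ} (x y z : Fin (n+1) → ℝ) :
    edot (x - y) z = edot x z - edot y z := by
  simp [edot, sub_mul, Finset.sum_sub_distrib]

lemma edot_sub_right {n : ℕ} (x y z : Fin (n+1) → ℝ) :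
    edot x (y - z) = edot x y - edot x z := by
  simp [edot, mul_sub, Finset.sum_sub_distrib]

lemma edot_single {n : ℕ} (c : ℝ) (y : Fin (n+1) → ℝ) :
    edot (c • (Pi.single (Fin.last n) 1 : Fin (n+1) → ℝ)) y = c * y (Fin.last n) := by
  simp [edot, Pi.single_apply, ite_mul, Finset.sum_ite_eq']

/-- If u ∈ K_C \ {0} satisfies (2p_{n+1}e^{n+1} − u)ᵀ(q − u/√(−κ⟨u,u⟩)) ≥ 0 for all q ∈ C
and u is a Euclidean orthogonal projection of p onto K_C, then
P_C(p) = u/√(−κ⟨u,u⟩), where P_C(p) is the (unique) maximizer of ⟨p,·⟩ over C. -/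
theorem intrinsic_projection_from_euclidean_projection {n : ℕ} (κ : ℝ) (hκ : 0 < κ)
    (C : Set (Fin (n+1) → ℝ)) (hC : C ⊆ Hyp κ) (hCc : IsClosed C)
    (hconv : Convex ℝ (coneOf C))
    (p u : Fin (n+1) → ℝ) (hp : p ∈ Hyp κ) (hu : u ∈ coneOf C) (hu0 : u ≠ 0)
    (hcond : ∀ q ∈ C, 0 ≤ edot ((2 * p (Fin.last n)) • (Pi.single (Fin.last n) 1 : Fin (n+1) → ℝ) - u)
      (q - (Real.sqrt (-(κ * lip u u)))⁻¹ • u))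
    (hproj1 : ∀ z ∈ coneOf C, edot (p - u) z ≤ 0)
    (hproj2 : edot (p - u) u = 0)
    (Pc : Fin (n+1) → ℝ) (hPmem : Pc ∈ C)
    (hPmax : ∀ q ∈ C, lip p q ≤ lip p Pc)
    (hPuniq : ∀ y ∈ C, (∀ q ∈ C, lip p q ≤ lip p y) → y = Pc) :
    Pc = (Real.sqrt (-(κ * lip u u)))⁻¹ • u := by
  obtain ⟨t, ht, q₀, hq₀, huq⟩ := hu
  have ht0 : 0 < t := by
    rcases ht.lt_or_eq with h | h
    · exact h
    · exfalso; apply hu0; rw [huq, ← h, zero_smul]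
  have hlq₀ : lip q₀ q₀ = -1/κ := (hC hq₀).1
  have hlu : lip u u = t^2 * (-1/κ) := by
    rw [huq, lip_smul_left, lip_smul_right, hlq₀]; ring
  have hs : Real.sqrt (-(κ * lip u u)) = t := by
    rw [hlu]
    have : -(κ * (t^2 * (-1/κ))) = t^2 := by field_simp
    rw [this, Real.sqrt_sq ht]
  have hq0eq : (Real.sqrt (-(κ * lip u u)))⁻¹ • u = q₀ := by
    rw [hs, huq, smul_smul, inv_mul_cancel₀ ht0.ne', one_smul]
  rw [hq0eq]
  refine (hPuniq q₀ hq₀ ?_).symm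
  intro q hq
  have h1 := hproj1 q ⟨1, zero_le_one, q, hq, (one_smul _ _).symm⟩
  have h2 := hcond q hq
  rw [hq0eq] at h2
  rw [edot_sub_left] at h1
  rw [edot_sub_left, edot_sub_right, edot_sub_right] at h2
  simp only [edot_single] at h2
  have hup : edot p u - edot u u = 0 := by
    have := hproj2; rwa [edot_sub_left] at this
  have hep : edot p q₀ = t⁻¹ * edot p u := by
    rw [huq, edot_smul_right]; field_simp
  have heu : edot u q₀ = t⁻¹ * edot u u := by
    simp only [huq, edot_smul_left, edot_smul_right]
    field_simp
  have hl1 : lip p q = edot p q - 2 * p (Fin.last n) * q (Fin.last n) := by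
    rw [edot_eq_lip]; ring
  have hl2 : lip p q₀ = edot p q₀ - 2 * p (Fin.last n) * q₀ (Fin.last n) := by
    rw [edot_eq_lip]; ring
  have h3 : edot p q₀ = edot u q₀ := by
    rw [hep, heu, show edot p u = edot u u from by linarith]
  linarith [h1, h2, h3, hl1, hl2]
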